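/- Let M := {x ∈ H_ℂ : ⟨x, w⟩ = 0 for all w ∈ W + σ(W)}, the orthogonal complement of W + σ(W) for the ℂ-bilinear extension of ⟨,⟩. Then H_ℂ = (W ⊕ σ(W)) ⊕ M as ℂ-vector spaces, M is a two-sided ideal of H_ℂ, and x·m = 0 = m·x for every x ∈ W + σ(W) and every m ∈ M; thus the ℂ-algebra H_ℂ decomposes as the direct sum of the two-sided ideals W ⊕ σ(W) and M. -/

import Mathlib

open scoped TensorProduct

noncomputable section

/-- Complex conjugation on `ℂ` as a `ℚ`-algebra homomorphism. -/
def conjQAlg : ℂ →ₐ[ℚ] ℂ := (Complex.conjAe.restrictScalars ℚ).toAlgHom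

variable (H : Type) [Ring H] [Algebra ℚ H] [FiniteDimensional ℚ H]

/-- The conjugate-linear involution of `H_ℂ = ℂ ⊗[ℚ] H` fixing `H`. -/
def sigmaC : ℂ ⊗[ℚ] H →ₗ[ℚ] ℂ ⊗[ℚ] H :=
  (Algebra.TensorProduct.map conjQAlg (AlgHom.id ℚ H)).toLinearMap

/-- The inclusion of `H` into `H_ℂ = ℂ ⊗[ℚ] H`. -/
def inclH : H →ₐ[ℚ] ℂ ⊗[ℚ] H := Algebra.TensorProduct.includeRight

/-- The data of a polarized weight 2 Hodge structure on a finite-dimensional `ℚ`-algebra `H`,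
compatible with the ring structure:
(i) a Hodge decomposition `H_ℂ = H^{2,0} ⊕ H^{1,1} ⊕ H^{0,2}` with `σ(H^{2,0}) = H^{0,2}`,
`σ(H^{1,1}) = H^{1,1}`;
(ii) a polarization: a symmetric `ℚ`-bilinear form `B` on `H` with `ℂ`-bilinear extension `BC`
to `H_ℂ`, whose associated Hermitian pairing `h(α,β) := BC α (σ β)` makes the Hodge pieces
pairwise orthogonal and is positive definite on `H^{2,0}`, `H^{0,2}` and negative definite on
`H^{1,1}`;
(iii) the product is a morphism of Hodge structures of bidegree `(-1,-1)`:
`H^{p,q}·H^{p',q'} ⊆ H^{p+p'-1,q+q'-1}`;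
(iv) an adjunction `t`: a `ℚ`-linear involution with `t(ab) = t(b)t(a)`,
`⟨ab,c⟩ = ⟨b, t(a)c⟩` and `⟨ab,c⟩ = ⟨a, c·t(b)⟩`. -/
structure HodgeAlgebraData where
  H20 : Submodule ℂ (ℂ ⊗[ℚ] H)
  H11 : Submodule ℂ (ℂ ⊗[ℚ] H)
  H02 : Submodule ℂ (ℂ ⊗[ℚ] H)
  sup_top : H20 ⊔ H11 ⊔ H02 = ⊤
  disj1 : H20 ⊓ (H11 ⊔ H02) = ⊥
  disj2 : H11 ⊓ H02 = ⊥
  sigma_20 : ∀ x ∈ H20, sigmaC H x ∈ H02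
  sigma_02 : ∀ x ∈ H02, sigmaC H x ∈ H20
  sigma_11 : ∀ x ∈ H11, sigmaC H x ∈ H11
  B : H →ₗ[ℚ] H →ₗ[ℚ] ℚ
  B_symm : ∀ a b : H, B a b = B b a
  BC : (ℂ ⊗[ℚ] H) →ₗ[ℂ] (ℂ ⊗[ℚ] H) →ₗ[ℂ] ℂ
  BC_extends : ∀ a b : H, BC (inclH H a) (inclH H b) = (B a b : ℂ)
  BC_symm : ∀ x y, BC x y = BC y x
  BC_conj : ∀ x y, BC (sigmaC H x) (sigmaC H y) = starRingEnd ℂ (BC x y)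
  orth_20_11 : ∀ x ∈ H20, ∀ y ∈ H11, BC x (sigmaC H y) = 0
  orth_20_02 : ∀ x ∈ H20, ∀ y ∈ H02, BC x (sigmaC H y) = 0
  orth_11_02 : ∀ x ∈ H11, ∀ y ∈ H02, BC x (sigmaC H y) = 0
  pos_20 : ∀ x ∈ H20, x ≠ 0 → 0 < (BC x (sigmaC H x)).re ∧ (BC x (sigmaC H x)).im = 0
  pos_02 : ∀ x ∈ H02, x ≠ 0 → 0 < (BC x (sigmaC H x)).re ∧ (BC x (sigmaC H x)).im = 0
  neg_11 : ∀ x ∈ H11, x ≠ 0 → (BC x (sigmaC H x)).re < 0 ∧ (BC x (sigmaC H x)).im = 0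
  mul_20_20 : ∀ x ∈ H20, ∀ y ∈ H20, x * y = 0
  mul_20_11 : ∀ x ∈ H20, ∀ y ∈ H11, x * y ∈ H20
  mul_11_20 : ∀ x ∈ H11, ∀ y ∈ H20, x * y ∈ H20
  mul_11_11 : ∀ x ∈ H11, ∀ y ∈ H11, x * y ∈ H11
  mul_20_02 : ∀ x ∈ H20, ∀ y ∈ H02, x * y ∈ H11
  mul_02_20 : ∀ x ∈ H02, ∀ y ∈ H20, x * y ∈ H11
  mul_02_02 : ∀ x ∈ H02, ∀ y ∈ H02, x * y = 0
  mul_11_02 : ∀ x ∈ H11, ∀ y ∈ H02, x * y ∈ H02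
  mul_02_11 : ∀ x ∈ H02, ∀ y ∈ H11, x * y ∈ H02
  t : H →ₗ[ℚ] H
  t_invol : ∀ a : H, t (t a) = a
  t_mul : ∀ a b : H, t (a * b) = t b * t a
  adj_left : ∀ a b c : H, B (a * b) c = B b (t a * c)
  adj_right : ∀ a b c : H, B (a * b) c = B a (c * t b)

variable {H}

/-- `W := H^{2,0}·H_ℂ`, the `ℂ`-linear span of all products `x·y` with `x ∈ H^{2,0}`,
`y ∈ H_ℂ`. -/
def HodgeAlgebraData.W (D : HodgeAlgebraData H) : Submodule ℂ (ℂ ⊗[ℚ] H) := D.H20 * ⊤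

/-- `σ(W)`, the image of `W` under the conjugation `σ`, as a `ℚ`-subspace of `H_ℂ`. -/
def HodgeAlgebraData.sigmaW (D : HodgeAlgebraData H) : Submodule ℚ (ℂ ⊗[ℚ] H) :=
  (D.W.restrictScalars ℚ).map (sigmaC H)

/-- The `ℂ`-linear extension of `t` to `H_ℂ`. -/
def HodgeAlgebraData.tC (D : HodgeAlgebraData H) : ℂ ⊗[ℚ] H →ₗ[ℂ] ℂ ⊗[ℚ] H :=
  LinearMap.baseChange ℂ D.t

/-- `M`, the orthogonal complement of `W + σ(W)` in `H_ℂ` with respect to the `ℂ`-bilinear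
extension of `⟨,⟩`. -/
def HodgeAlgebraData.M (D : HodgeAlgebraData H) : Submodule ℂ (ℂ ⊗[ℚ] H) :=
  ⨅ w ∈ (D.W.restrictScalars ℚ) ⊔ D.sigmaW, LinearMap.ker (D.BC.flip w)

set_option linter.unusedSectionVars false
set_option maxHeartbeats 1000000

section Aux
variable {H : Type} [Ring H] [Algebra ℚ H] [FiniteDimensional ℚ H]

lemma sigma_mul (x y : ℂ ⊗[ℚ] H) : sigmaC H (x * y) = sigmaC H x * sigmaC H y :=
  map_mul (Algebra.TensorProduct.map conjQAlg (AlgHom.id ℚ H)) x y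

lemma sigma_tmul (z : ℂ) (a : H) : sigmaC H (z ⊗ₜ a) = (starRingEnd ℂ z) ⊗ₜ a := rfl

lemma sigma_sigma (x : ℂ ⊗[ℚ] H) : sigmaC H (sigmaC H x) = x := by
  induction x using TensorProduct.induction_on with
  | zero => simp
  | tmul z a => simp [sigma_tmul]
  | add x y hx hy => simp [map_add, hx, hy]

lemma sigma_smul (c : ℂ) (x : ℂ ⊗[ℚ] H) :
    sigmaC H (c • x) = (starRingEnd ℂ c) • sigmaC H x := by
  induction x using TensorProduct.induction_on with
  | zero => simp
  | tmul z a => rw [TensorProduct.smul_tmul', sigma_tmul, sigma_tmul, TensorProduct.smul_tmul']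
                simp [smul_eq_mul]
  | add x y hx hy => simp only [smul_add, map_add, hx, hy]

lemma span_inclH : Submodule.span ℂ (Set.range (inclH H)) = ⊤ := by
  rw [Submodule.eq_top_iff']
  intro x
  induction x using TensorProduct.induction_on with
  | zero => exact Submodule.zero_mem _
  | tmul z a =>
      have : z ⊗ₜ[ℚ] a = z • (inclH H a) := by
        simp [inclH, TensorProduct.smul_tmul', smul_eq_mul]
      rw [this]
      exact Submodule.smul_mem _ _ (Submodule.subset_span ⟨a, rfl⟩)
  | add x y hx hy => exact Submodule.add_mem _ hx hy

lemma inclH_induction {p : ℂ ⊗[ℚ] H → Prop} (h0 : p 0)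
    (hadd : ∀ x y, p x → p y → p (x + y))
    (hsmul : ∀ (c : ℂ) x, p x → p (c • x))
    (hincl : ∀ a : H, p (inclH H a)) : ∀ x, p x := by
  intro x
  have hx : x ∈ Submodule.span ℂ (Set.range (inclH H)) := by rw [span_inclH]; trivial
  refine Submodule.span_induction ?_ h0 (fun x y _ _ => hadd x y)
    (fun c x _ hp => hsmul c x hp) hx
  rintro _ ⟨a, rfl⟩; exact hincl a

variable (D : HodgeAlgebraData H)

lemma tC_incl (a : H) : D.tC (inclH H a) = inclH H (D.t a) := by
  simp [HodgeAlgebraData.tC, inclH]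

/-- adjunction over ℂ, left form -/
lemma BCadj_left : ∀ a b c : ℂ ⊗[ℚ] H, D.BC (a * b) c = D.BC b (D.tC a * c) := by
  have key : ∀ a b c : H,
      D.BC (inclH H a * inclH H b) (inclH H c)
        = D.BC (inclH H b) (D.tC (inclH H a) * inclH H c) := by
    intro a b c
    rw [← map_mul, tC_incl, ← map_mul, D.BC_extends, D.BC_extends, D.adj_left]
  intro a
  induction a using inclH_induction with
  | h0 => intro b c; simp
  | hadd x y hx hy => intro b c; simp [add_mul, map_add, hx, hy]
  | hsmul z x hx => intro b c; simp [smul_mul_assoc, map_smul, hx]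
  | hincl a =>
    intro b
    induction b using inclH_induction with
    | h0 => intro c; simp
    | hadd x y hx hy => intro c; simp [mul_add, map_add, hx, hy]
    | hsmul z x hx => intro c; simp [mul_smul_comm, map_smul, hx]
    | hincl b =>
      intro c
      induction c using inclH_induction with
      | h0 => simp
      | hadd x y hx hy => simp [mul_add, map_add, hx, hy]
      | hsmul z x hx => simp [mul_smul_comm, map_smul, hx]
      | hincl c => exact key a b c

/-- adjunction over ℂ, right form -/
lemma BCadj_right : ∀ a b c : ℂ ⊗[ℚ] H, D.BC (a * b) c = D.BC a (c * D.tC b) := by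
  have key : ∀ a b c : H,
      D.BC (inclH H a * inclH H b) (inclH H c)
        = D.BC (inclH H a) (inclH H c * D.tC (inclH H b)) := by
    intro a b c
    rw [← map_mul, tC_incl, ← map_mul, D.BC_extends, D.BC_extends, D.adj_right]
  intro a
  induction a using inclH_induction with
  | h0 => intro b c; simp
  | hadd x y hx hy => intro b c; simp [add_mul, map_add, hx, hy]
  | hsmul z x hx => intro b c; simp [smul_mul_assoc, map_smul, hx]
  | hincl a =>
    intro b
    induction b using inclH_induction with
    | h0 => intro c; simp
    | hadd x y hx hy => intro c; simp [mul_add, add_mul, map_add, hx, hy]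
    | hsmul z x hx => intro c; simp [mul_smul_comm, smul_mul_assoc, map_smul, hx]
    | hincl b =>
      intro c
      induction c using inclH_induction with
      | h0 => simp
      | hadd x y hx hy => simp [add_mul, map_add, hx, hy]
      | hsmul z x hx => simp [smul_mul_assoc, map_smul, hx]
      | hincl c => exact key a b c

end Aux
section Aux2
variable {H : Type} [Ring H] [Algebra ℚ H] [FiniteDimensional ℚ H]
variable (D : HodgeAlgebraData H)

-- pairing table
lemma bc_20_20 {x y} (hx : x ∈ D.H20) (hy : y ∈ D.H20) : D.BC x y = 0 := by
  have := D.orth_20_02 x hx (sigmaC H y) (D.sigma_20 y hy)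
  rwa [sigma_sigma] at this

lemma bc_20_11 {x y} (hx : x ∈ D.H20) (hy : y ∈ D.H11) : D.BC x y = 0 := by
  have := D.orth_20_11 x hx (sigmaC H y) (D.sigma_11 y hy)
  rwa [sigma_sigma] at this

lemma bc_11_20 {x y} (hx : x ∈ D.H11) (hy : y ∈ D.H20) : D.BC x y = 0 := by
  have := D.orth_11_02 x hx (sigmaC H y) (D.sigma_20 y hy)
  rwa [sigma_sigma] at this

lemma bc_02_11 {x y} (hx : x ∈ D.H02) (hy : y ∈ D.H11) : D.BC x y = 0 := by
  have h := D.BC_conj (sigmaC H x) (sigmaC H y)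
  rw [sigma_sigma, sigma_sigma] at h
  rw [h, bc_20_11 D (D.sigma_02 x hx) (D.sigma_11 y hy), map_zero]

lemma bc_11_02 {x y} (hx : x ∈ D.H11) (hy : y ∈ D.H02) : D.BC x y = 0 := by
  rw [D.BC_symm]; exact bc_02_11 D hy hx

lemma bc_02_02 {x y} (hx : x ∈ D.H02) (hy : y ∈ D.H02) : D.BC x y = 0 := by
  have h := D.BC_conj (sigmaC H x) (sigmaC H y)
  rw [sigma_sigma, sigma_sigma] at h
  rw [h, bc_20_20 D (D.sigma_02 x hx) (D.sigma_02 y hy), map_zero]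

-- zero-detection from definiteness
lemma eq_zero_20 {x} (hx : x ∈ D.H20) (h : D.BC x (sigmaC H x) = 0) : x = 0 := by
  by_contra hne
  have := (D.pos_20 x hx hne).1
  rw [h] at this; simp at this

lemma eq_zero_02 {x} (hx : x ∈ D.H02) (h : D.BC x (sigmaC H x) = 0) : x = 0 := by
  by_contra hne
  have := (D.pos_02 x hx hne).1
  rw [h] at this; simp at this

lemma eq_zero_11 {x} (hx : x ∈ D.H11) (h : D.BC x (sigmaC H x) = 0) : x = 0 := by
  by_contra hne
  have := (D.neg_11 x hx hne).1
  rw [h] at this; simp at this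

-- decomposition
lemma decomp (a : ℂ ⊗[ℚ] H) :
    ∃ x ∈ D.H20, ∃ y ∈ D.H11, ∃ z ∈ D.H02, a = x + y + z := by
  have ha : a ∈ D.H20 ⊔ D.H11 ⊔ D.H02 := by rw [D.sup_top]; trivial
  obtain ⟨u, hu, z, hz, rfl⟩ := Submodule.mem_sup.1 ha
  obtain ⟨x, hx, y, hy, rfl⟩ := Submodule.mem_sup.1 hu
  exact ⟨x, hx, y, hy, z, hz, rfl⟩

/-- `σW` as a `ℂ`-submodule. -/
def SWc : Submodule ℂ (ℂ ⊗[ℚ] H) := D.H02 * ⊤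

lemma H20_le_W : D.H20 ≤ D.W := fun x hx => by
  have : x = x * 1 := (mul_one x).symm
  rw [this]
  exact Submodule.mul_mem_mul hx trivial

lemma H02_le_SW : D.H02 ≤ SWc D := fun x hx => by
  have : x = x * 1 := (mul_one x).symm
  rw [this]
  exact Submodule.mul_mem_mul hx trivial

lemma W_le : D.W ≤ D.H20 ⊔ D.H11 := by
  refine Submodule.mul_le.2 fun m hm n _ => ?_
  obtain ⟨x, hx, y, hy, z, hz, rfl⟩ := decomp D n
  rw [mul_add, mul_add, D.mul_20_20 m hm x hx, zero_add]
  exact Submodule.add_mem _ (Submodule.mem_sup_left (D.mul_20_11 m hm y hy))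
    (Submodule.mem_sup_right (D.mul_20_02 m hm z hz))

lemma SW_le : SWc D ≤ D.H11 ⊔ D.H02 := by
  refine Submodule.mul_le.2 fun m hm n _ => ?_
  obtain ⟨x, hx, y, hy, z, hz, rfl⟩ := decomp D n
  rw [mul_add, mul_add, D.mul_02_02 m hm z hz, add_zero]
  exact Submodule.add_mem _ (Submodule.mem_sup_left (D.mul_02_20 m hm x hx))
    (Submodule.mem_sup_right (D.mul_02_11 m hm y hy))

/-- preimage of a ℂ-submodule under σ, as ℂ-submodule -/
def sigmaPreim (Q : Submodule ℂ (ℂ ⊗[ℚ] H)) : Submodule ℂ (ℂ ⊗[ℚ] H) where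
  carrier := {x | sigmaC H x ∈ Q}
  add_mem' := fun {x y} hx hy => by simp only [Set.mem_setOf_eq, map_add] at *; exact Q.add_mem hx hy
  zero_mem' := by simp only [Set.mem_setOf_eq, map_zero]; exact Q.zero_mem
  smul_mem' := fun c x hx => by
    simp only [Set.mem_setOf_eq] at *
    rw [sigma_smul]; exact Q.smul_mem _ hx

lemma mem_sigmaPreim {Q : Submodule ℂ (ℂ ⊗[ℚ] H)} {x} : x ∈ sigmaPreim Q ↔ sigmaC H x ∈ Q :=
  Iff.rfl

lemma sigmaW_eq : D.sigmaW = (SWc D).restrictScalars ℚ := by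
  apply le_antisymm
  · rintro _ ⟨w, hw, rfl⟩
    have : D.W ≤ sigmaPreim (SWc D) := by
      refine Submodule.mul_le.2 fun m hm n _ => ?_
      rw [mem_sigmaPreim, sigma_mul]
      exact Submodule.mul_mem_mul (D.sigma_20 m hm) trivial
    exact this hw
  · intro w hw
    have : SWc D ≤ sigmaPreim D.W := by
      refine Submodule.mul_le.2 fun m hm n _ => ?_
      rw [mem_sigmaPreim, sigma_mul]
      exact Submodule.mul_mem_mul (D.sigma_02 m hm) trivial
    exact ⟨sigmaC H w, this hw, sigma_sigma w⟩

lemma W_mul_right {y} (hy : y ∈ D.W) (a : ℂ ⊗[ℚ] H) : y * a ∈ D.W := by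
  have : D.W ≤ Submodule.comap (LinearMap.mulRight ℂ a) D.W := by
    refine Submodule.mul_le.2 fun m hm n _ => ?_
    simp only [Submodule.mem_comap, LinearMap.mulRight_apply, mul_assoc]
    exact Submodule.mul_mem_mul hm trivial
  exact this hy

lemma SW_mul_right {y} (hy : y ∈ SWc D) (a : ℂ ⊗[ℚ] H) : y * a ∈ SWc D := by
  have : SWc D ≤ Submodule.comap (LinearMap.mulRight ℂ a) (SWc D) := by
    refine Submodule.mul_le.2 fun m hm n _ => ?_
    simp only [Submodule.mem_comap, LinearMap.mulRight_apply, mul_assoc]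
    exact Submodule.mul_mem_mul hm trivial
  exact this hy

lemma BC_W_W : ∀ x ∈ D.W, ∀ y ∈ D.W, D.BC x y = 0 := by
  intro x hx y hy
  have : D.W ≤ LinearMap.ker (D.BC.flip y) := by
    refine Submodule.mul_le.2 fun m hm n _ => ?_
    rw [LinearMap.mem_ker, LinearMap.flip_apply, BCadj_right]
    have hyW : y * D.tC n ∈ D.H20 ⊔ D.H11 := W_le D (W_mul_right D hy _)
    obtain ⟨u, hu, v, hv, heq⟩ := Submodule.mem_sup.1 hyW
    rw [← heq, map_add, bc_20_20 D hm hu, bc_20_11 D hm hv, add_zero]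
  exact this hx

lemma BC_SW_SW : ∀ x ∈ SWc D, ∀ y ∈ SWc D, D.BC x y = 0 := by
  intro x hx y hy
  have : SWc D ≤ LinearMap.ker (D.BC.flip y) := by
    refine Submodule.mul_le.2 fun m hm n _ => ?_
    rw [LinearMap.mem_ker, LinearMap.flip_apply, BCadj_right]
    have hyW : y * D.tC n ∈ D.H11 ⊔ D.H02 := SW_le D (SW_mul_right D hy _)
    obtain ⟨u, hu, v, hv, heq⟩ := Submodule.mem_sup.1 hyW
    rw [← heq, map_add, bc_02_11 D hm hu, bc_02_02 D hm hv, add_zero]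
  exact this hx

end Aux2
section Aux3
variable {H : Type} [Ring H] [Algebra ℚ H] [FiniteDimensional ℚ H]
variable (D : HodgeAlgebraData H)

/-- key lemma L: h-nondegeneracy on W -/
lemma lemL {w} (hw : w ∈ D.W) (h : ∀ w' ∈ D.W, D.BC w (sigmaC H w') = 0) : w = 0 := by
  obtain ⟨a, ha, b, hb, heq⟩ := Submodule.mem_sup.1 (W_le D hw)
  have ha0 : a = 0 := by
    apply eq_zero_20 D ha
    have h1 := h a (H20_le_W D ha)
    rw [← heq, map_add, LinearMap.add_apply, bc_11_02 D hb (D.sigma_20 a ha), add_zero] at h1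
    exact h1
  have hb0 : b = 0 := by
    apply eq_zero_11 D hb
    have h1 := h w hw
    rw [← heq, ha0, zero_add] at h1
    exact h1
  rw [← heq, ha0, hb0, add_zero]

lemma lemL' {w} (hw : w ∈ SWc D) (h : ∀ w' ∈ SWc D, D.BC w (sigmaC H w') = 0) : w = 0 := by
  obtain ⟨b, hb, c, hc, heq⟩ := Submodule.mem_sup.1 (SW_le D hw)
  have hc0 : c = 0 := by
    apply eq_zero_02 D hc
    have h1 := h c (H02_le_SW D hc)
    rw [← heq, map_add, LinearMap.add_apply, bc_11_20 D hb (D.sigma_02 c hc), zero_add] at h1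
    exact h1
  have hb0 : b = 0 := by
    apply eq_zero_11 D hb
    have h1 := h w hw
    rw [← heq, hc0, add_zero] at h1
    exact h1
  rw [← heq, hb0, hc0, add_zero]

/-- `U = W ⊔ σW` as ℂ-submodule -/
def Uc : Submodule ℂ (ℂ ⊗[ℚ] H) := D.W ⊔ SWc D

lemma U_restrict :
    (Uc D).restrictScalars ℚ = (D.W.restrictScalars ℚ) ⊔ D.sigmaW := by
  rw [sigmaW_eq]
  ext x
  simp only [Submodule.restrictScalars_mem, Submodule.mem_sup, Uc]

lemma sigma_mem_U {x} (hx : x ∈ Uc D) : sigmaC H x ∈ Uc D := by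
  obtain ⟨u, hu, v, hv, heq⟩ := Submodule.mem_sup.1 hx
  have h1 : sigmaC H u ∈ SWc D := by
    rw [← Submodule.restrictScalars_mem ℚ, ← sigmaW_eq]
    exact ⟨u, hu, rfl⟩
  have h2 : sigmaC H v ∈ D.W := by
    have : v ∈ (SWc D).restrictScalars ℚ := hv
    rw [← sigmaW_eq] at this
    obtain ⟨w', hw', hw''⟩ := this
    rw [← hw'', sigma_sigma]
    exact hw'
  rw [← heq, map_add]
  exact Submodule.add_mem _ (Submodule.mem_sup_right h1) (Submodule.mem_sup_left h2)

lemma BC_refl : D.BC.IsRefl := fun x y h => by rw [D.BC_symm]; exact h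

lemma U_nondeg_aux {u} (hu : u ∈ Uc D) (h : ∀ v ∈ Uc D, D.BC u v = 0) : u = 0 := by
  obtain ⟨w, hw, v, hv, heq⟩ := Submodule.mem_sup.1 hu
  have hw0 : w = 0 := by
    apply lemL D hw
    intro w' hw'
    have hsw' : sigmaC H w' ∈ SWc D := by
      rw [← Submodule.restrictScalars_mem ℚ, ← sigmaW_eq]
      exact ⟨w', hw', rfl⟩
    have h1 := h (sigmaC H w') (Submodule.mem_sup_right hsw')
    rw [← heq, map_add, LinearMap.add_apply, BC_SW_SW D v hv _ hsw', add_zero] at h1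
    exact h1
  have hv0 : v = 0 := by
    apply lemL' D hv
    intro v' hv'
    have hsv' : sigmaC H v' ∈ D.W := by
      have : v' ∈ (SWc D).restrictScalars ℚ := hv'
      rw [← sigmaW_eq] at this
      obtain ⟨w', hw', hw''⟩ := this
      rw [← hw'', sigma_sigma]; exact hw'
    have h1 := h (sigmaC H v') (Submodule.mem_sup_left hsv')
    rw [← heq, map_add, LinearMap.add_apply, BC_W_W D w hw _ hsv', zero_add] at h1
    exact h1
  rw [← heq, hw0, hv0, add_zero]

lemma M_mem_iff {m} : m ∈ D.M ↔ ∀ u ∈ Uc D, D.BC m u = 0 := by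
  simp only [HodgeAlgebraData.M, Submodule.mem_iInf, LinearMap.mem_ker, LinearMap.flip_apply]
  constructor
  · intro hx u hu
    exact hx u (by rw [← U_restrict]; exact hu)
  · intro hx u hu
    exact hx u (by rw [← U_restrict] at hu; exact hu)

lemma M_eq_orth : D.M = LinearMap.BilinForm.orthogonal D.BC (Uc D) := by
  ext x
  rw [M_mem_iff]
  simp only [LinearMap.BilinForm.mem_orthogonal_iff, LinearMap.BilinForm.isOrtho_def]
  constructor
  · intro hx n hn
    rw [D.BC_symm]
    exact hx n hn
  · intro hx u hu
    rw [D.BC_symm]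
    exact hx u hu

lemma U_isCompl : IsCompl (Uc D) (LinearMap.BilinForm.orthogonal D.BC (Uc D)) := by
  refine (LinearMap.BilinForm.restrict_nondegenerate_iff_isCompl_orthogonal (BC_refl D)).1 ?_
  have hsep : ∀ u : Uc D, (∀ v : Uc D, D.BC u v = 0) → u = 0 := by
    intro ⟨u, hu⟩ h
    have : u = 0 := by
      apply U_nondeg_aux D hu
      intro v hv
      exact h ⟨v, hv⟩
    exact Subtype.ext this
  exact ⟨fun u h => hsep u h, fun u h => hsep u fun v => by rw [D.BC_symm]; exact h v⟩

-- U is a two-sided ideal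
lemma U_right_ideal {u} (hu : u ∈ Uc D) (a : ℂ ⊗[ℚ] H) : u * a ∈ Uc D := by
  obtain ⟨w, hw, v, hv, heq⟩ := Submodule.mem_sup.1 hu
  rw [← heq, add_mul]
  exact Submodule.add_mem _ (Submodule.mem_sup_left (W_mul_right D hw a))
    (Submodule.mem_sup_right (SW_mul_right D hv a))

lemma U_left_ideal (a : ℂ ⊗[ℚ] H) {u} (hu : u ∈ Uc D) : a * u ∈ Uc D := by
  obtain ⟨w, hw, v, hv, heq⟩ := Submodule.mem_sup.1 hu
  have hW : D.W ≤ Submodule.comap (LinearMap.mulLeft ℂ a) (Uc D) := by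
    refine Submodule.mul_le.2 fun m hm n _ => ?_
    simp only [Submodule.mem_comap, LinearMap.mulLeft_apply]
    obtain ⟨x, hx, y, hy, z, hz, haeq⟩ := decomp D a
    rw [haeq, add_mul, add_mul]
    refine Submodule.add_mem _ (Submodule.add_mem _ ?_ ?_) ?_
    · exact Submodule.mem_sup_left (Submodule.mul_mem_mul hx trivial)
    · rw [← mul_assoc]
      exact Submodule.mem_sup_left (Submodule.mul_mem_mul (D.mul_11_20 y hy m hm) trivial)
    · exact Submodule.mem_sup_right (Submodule.mul_mem_mul hz trivial)
  have hSW : SWc D ≤ Submodule.comap (LinearMap.mulLeft ℂ a) (Uc D) := by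
    refine Submodule.mul_le.2 fun m hm n _ => ?_
    simp only [Submodule.mem_comap, LinearMap.mulLeft_apply]
    obtain ⟨x, hx, y, hy, z, hz, haeq⟩ := decomp D a
    rw [haeq, add_mul, add_mul]
    refine Submodule.add_mem _ (Submodule.add_mem _ ?_ ?_) ?_
    · exact Submodule.mem_sup_left (Submodule.mul_mem_mul hx trivial)
    · rw [← mul_assoc]
      exact Submodule.mem_sup_right (Submodule.mul_mem_mul (D.mul_11_02 y hy m hm) trivial)
    · exact Submodule.mem_sup_right (Submodule.mul_mem_mul hz trivial)
  rw [← heq, mul_add]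
  exact Submodule.add_mem _ (hW hw) (hSW hv)

lemma M_ideal {m} (hm : m ∈ D.M) (a : ℂ ⊗[ℚ] H) : a * m ∈ D.M ∧ m * a ∈ D.M := by
  rw [M_mem_iff] at hm ⊢
  constructor
  · intro u hu
    rw [BCadj_left]
    exact hm _ (U_left_ideal D _ hu)
  · rw [M_mem_iff]
    intro u hu
    rw [BCadj_right]
    exact hm _ (U_right_ideal D hu _)

end Aux3
/-- With `M` the orthogonal complement of `W + σ(W)` for `⟨,⟩`, one has
`H_ℂ = (W ⊕ σ(W)) ⊕ M` as `ℂ`-vector spaces, `M` is a two-sided ideal of `H_ℂ`, and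
`x·m = 0 = m·x` for `x ∈ W + σ(W)` and `m ∈ M`; thus the `ℂ`-algebra `H_ℂ` decomposes as
the direct sum of the two-sided ideals `W ⊕ σ(W)` and `M`. -/
theorem orthogonal_algebra_decomposition (D : HodgeAlgebraData H) :
    (D.W.restrictScalars ℚ) ⊓ D.sigmaW = ⊥ ∧
    ((D.W.restrictScalars ℚ) ⊔ D.sigmaW) ⊓ (D.M.restrictScalars ℚ) = ⊥ ∧
    ((D.W.restrictScalars ℚ) ⊔ D.sigmaW) ⊔ (D.M.restrictScalars ℚ) = ⊤ ∧
    (∀ m ∈ D.M, ∀ a : ℂ ⊗[ℚ] H, a * m ∈ D.M ∧ m * a ∈ D.M) ∧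
    (∀ x ∈ (D.W.restrictScalars ℚ) ⊔ D.sigmaW, ∀ m ∈ D.M, x * m = 0 ∧ m * x = 0) := by
  have hcompl := U_isCompl D
  have hdisj : Uc D ⊓ LinearMap.BilinForm.orthogonal D.BC (Uc D) = ⊥ := hcompl.inf_eq_bot
  have hsup : Uc D ⊔ LinearMap.BilinForm.orthogonal D.BC (Uc D) = ⊤ := hcompl.sup_eq_top
  have hMU : ∀ x, x ∈ Uc D → x ∈ D.M → x = 0 := by
    intro x hU hM
    rw [M_eq_orth] at hM
    have : x ∈ Uc D ⊓ LinearMap.BilinForm.orthogonal D.BC (Uc D) := ⟨hU, hM⟩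
    rw [hdisj] at this
    exact this
  refine ⟨?_, ?_, ?_, fun m hm a => M_ideal D hm a, ?_⟩
  · -- W ⊓ σW = ⊥
    rw [eq_bot_iff]
    rintro w ⟨hw1, hw2⟩
    simp only [Submodule.mem_bot]
    obtain ⟨v, hv, hveq⟩ := hw2
    refine lemL D hw1 fun w' hw' => ?_
    rw [← hveq, D.BC_conj, BC_W_W D v hv w' hw', map_zero]
  · -- (W ⊔ σW) ⊓ M = ⊥
    rw [eq_bot_iff]
    rintro x ⟨hx1, hx2⟩
    simp only [Submodule.mem_bot]
    refine hMU x ?_ hx2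
    rw [← Submodule.restrictScalars_mem ℚ, U_restrict]
    exact hx1
  · -- sup = ⊤
    rw [eq_top_iff]
    intro x _
    have hx : x ∈ Uc D ⊔ LinearMap.BilinForm.orthogonal D.BC (Uc D) := by rw [hsup]; trivial
    obtain ⟨u, hu, m, hm, heq⟩ := Submodule.mem_sup.1 hx
    rw [← heq]
    refine Submodule.add_mem _ (Submodule.mem_sup_left ?_) (Submodule.mem_sup_right ?_)
    · rw [← U_restrict]; exact hu
    · rw [M_eq_orth]; exact hm
  · -- annihilation
    intro x hx m hm
    have hxU : x ∈ Uc D := by rw [← Submodule.restrictScalars_mem ℚ, U_restrict]; exact hx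
    constructor
    · exact hMU _ (U_right_ideal D hxU m) (M_ideal D hm x).1
    · exact hMU _ (U_left_ideal D m hxU) (M_ideal D hm x).2
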